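/- For $p > 2$ and real $s \in (-1/2, 1/2)$: $(1+s)^{2/p} \le 1 + \tfrac{2s}{p} - (p-2)\tfrac{s^2}{p^2} + \tfrac23 (p-1)(p-2)\tfrac{s^3}{p^3}$. -/

import Mathlib

open Real Set

private lemma hd_rpow (b x : ℝ) (hx : -1 < x) :
    HasDerivAt (fun y : ℝ => (1 + y) ^ b) (b * (1 + x) ^ (b - 1)) x := by
  have h1 : HasDerivAt (fun y : ℝ => 1 + y) 1 x := (hasDerivAt_id x).const_add 1
  have h2 := (Real.hasDerivAt_rpow_const (x := 1 + x) (p := b)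
    (Or.inl (by linarith))).comp x h1
  simpa [Function.comp_def] using h2

/-- helper: sign of f from sign of derivative, on (-1, ∞), with f 0 = 0. -/
private lemma nonneg_of_deriv_sign (f f' : ℝ → ℝ) (hf0 : f 0 = 0)
    (hd : ∀ x, -1 < x → HasDerivAt f (f' x) x)
    (hpos : ∀ x, 0 < x → 0 ≤ f' x)
    (hneg : ∀ x, -1 < x → x < 0 → f' x ≤ 0)
    (t : ℝ) (ht : -1 < t) : 0 ≤ f t := by
  rcases le_or_gt 0 t with h | h
  · have hmono : MonotoneOn f (Icc 0 t) := by
      apply monotoneOn_of_hasDerivWithinAt_nonneg (f' := f') (convex_Icc 0 t)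
      · intro x hx
        exact ((hd x (by simp at hx; linarith)).continuousAt).continuousWithinAt
      · intro x hx
        rw [interior_Icc] at hx
        exact ((hd x (by linarith [hx.1])).hasDerivWithinAt)
      · intro x hx
        rw [interior_Icc] at hx
        exact hpos x hx.1
    have := hmono (left_mem_Icc.2 h) (right_mem_Icc.2 h) h
    linarith [this, hf0.ge]
  · have hanti : AntitoneOn f (Icc t 0) := by
      apply antitoneOn_of_hasDerivWithinAt_nonpos (f' := f') (convex_Icc t 0)
      · intro x hx
        exact ((hd x (by simp at hx; linarith)).continuousAt).continuousWithinAt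
      · intro x hx
        rw [interior_Icc] at hx
        exact ((hd x (by linarith [hx.1])).hasDerivWithinAt)
      · intro x hx
        rw [interior_Icc] at hx
        exact hneg x (by linarith [hx.1]) hx.2
    have := hanti (left_mem_Icc.2 h.le) (right_mem_Icc.2 h.le) h.le
    linarith [this, hf0.le]

/-- helper: f' ≥ 0 everywhere gives sign condition for f. -/
private lemma sign_of_deriv_nonneg (f f' : ℝ → ℝ) (hf0 : f 0 = 0)
    (hd : ∀ x, -1 < x → HasDerivAt f (f' x) x)
    (hnn : ∀ x, -1 < x → 0 ≤ f' x) :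
    (∀ x, 0 < x → 0 ≤ f x) ∧ (∀ x, -1 < x → x < 0 → f x ≤ 0) := by
  constructor
  · intro t ht
    have hmono : MonotoneOn f (Icc 0 t) := by
      apply monotoneOn_of_hasDerivWithinAt_nonneg (f' := f') (convex_Icc 0 t)
      · intro x hx
        exact ((hd x (by simp at hx; linarith)).continuousAt).continuousWithinAt
      · intro x hx
        rw [interior_Icc] at hx
        exact ((hd x (by linarith [hx.1])).hasDerivWithinAt)
      · intro x hx
        rw [interior_Icc] at hx
        exact hnn x (by linarith [hx.1])
    have := hmono (left_mem_Icc.2 ht.le) (right_mem_Icc.2 ht.le) ht.le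
    linarith [this, hf0.ge]
  · intro t ht1 ht2
    have hmono : MonotoneOn f (Icc t 0) := by
      apply monotoneOn_of_hasDerivWithinAt_nonneg (f' := f') (convex_Icc t 0)
      · intro x hx
        exact ((hd x (by simp at hx; linarith)).continuousAt).continuousWithinAt
      · intro x hx
        rw [interior_Icc] at hx
        exact ((hd x (by linarith [hx.1])).hasDerivWithinAt)
      · intro x hx
        rw [interior_Icc] at hx
        exact hnn x (by linarith [hx.1])
    have := hmono (left_mem_Icc.2 ht2.le) (right_mem_Icc.2 ht2.le) ht2.le
    linarith [this, hf0.ge]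

private lemma key (a : ℝ) (ha0 : 0 < a) (ha1 : a < 1) (t : ℝ) (ht : -1 < t) :
    (1 + t) ^ a ≤ 1 + a * t + a * (a - 1) / 2 * t ^ 2 + a * (a - 1) * (a - 2) / 6 * t ^ 3 := by
  set g2 : ℝ → ℝ := fun x => a * (a - 1) + a * (a - 1) * (a - 2) * x - a * (a - 1) * (1 + x) ^ (a - 2) with hg2def
  set g3 : ℝ → ℝ := fun x => a * (a - 1) * (a - 2) - a * (a - 1) * (a - 2) * (1 + x) ^ (a - 3) with hg3def
  set g1 : ℝ → ℝ := fun x => a + a * (a - 1) * x + a * (a - 1) * (a - 2) / 2 * x ^ 2 - a * (1 + x) ^ (a - 1) with hg1def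
  set g0 : ℝ → ℝ := fun x => 1 + a * x + a * (a - 1) / 2 * x ^ 2 + a * (a - 1) * (a - 2) / 6 * x ^ 3 - (1 + x) ^ a with hg0def
  have hd2 : ∀ x, -1 < x → HasDerivAt g2 (g3 x) x := by
    intro x hx
    have h := hd_rpow (a - 2) x hx
    have : HasDerivAt g2 (a * (a - 1) * (a - 2) - a * (a - 1) * ((a - 2) * (1 + x) ^ (a - 2 - 1))) x := by
      apply HasDerivAt.sub
      · simpa using ((hasDerivAt_id x).const_mul (a * (a - 1) * (a - 2))).const_add (a * (a - 1))
      · exact h.const_mul (a * (a - 1))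
    convert this using 1
    simp [hg3def]
    ring_nf
  have hd1 : ∀ x, -1 < x → HasDerivAt g1 (g2 x) x := by
    intro x hx
    have h := hd_rpow (a - 1) x hx
    have : HasDerivAt g1 ((a * (a - 1) + a * (a - 1) * (a - 2) / 2 * (2 * x)) - a * ((a - 1) * (1 + x) ^ (a - 1 - 1))) x := by
      apply HasDerivAt.sub
      · apply HasDerivAt.add
        · simpa using ((hasDerivAt_id x).const_mul (a * (a - 1))).const_add a
        · simpa using (((hasDerivAt_pow 2 x)).const_mul (a * (a - 1) * (a - 2) / 2))
      · exact h.const_mul a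
    convert this using 1
    simp [hg2def]
    ring_nf
  have hd0 : ∀ x, -1 < x → HasDerivAt g0 (g1 x) x := by
    intro x hx
    have h := hd_rpow a x hx
    have : HasDerivAt g0 ((a + a * (a - 1) / 2 * (2 * x) + a * (a - 1) * (a - 2) / 6 * (3 * x ^ 2)) - a * (1 + x) ^ (a - 1)) x := by
      apply HasDerivAt.sub
      · apply HasDerivAt.add
        · apply HasDerivAt.add
          · simpa using ((hasDerivAt_id x).const_mul a).const_add 1
          · simpa using (((hasDerivAt_pow 2 x)).const_mul (a * (a - 1) / 2))
        · simpa using (((hasDerivAt_pow 3 x)).const_mul (a * (a - 1) * (a - 2) / 6))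
      · simpa using h
    convert this using 1
    simp [hg1def]
    ring_nf
  -- sign of g3
  have hcoef : 0 < a * (a - 1) * (a - 2) := by nlinarith [mul_pos ha0 (mul_pos (by linarith : (0:ℝ) < 1 - a) (by linarith : (0:ℝ) < 2 - a))]
  have hg3pos : ∀ x, 0 < x → 0 ≤ g3 x := by
    intro x hx
    have h1 : (1 + x) ^ (a - 3) ≤ 1 :=
      Real.rpow_le_one_of_one_le_of_nonpos (by linarith) (by linarith)
    simp only [hg3def]
    nlinarith
  have hg3neg : ∀ x, -1 < x → x < 0 → g3 x ≤ 0 := by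
    intro x hx1 hx2
    have h1 : 1 ≤ (1 + x) ^ (a - 3) :=
      Real.one_le_rpow_of_pos_of_le_one_of_nonpos (by linarith) (by linarith) (by linarith)
    simp only [hg3def]
    nlinarith
  have hg20 : g2 0 = 0 := by simp [hg2def]
  have hg2nn : ∀ x, -1 < x → 0 ≤ g2 x :=
    fun x hx => nonneg_of_deriv_sign g2 g3 hg20 hd2 hg3pos hg3neg x hx
  have hg10 : g1 0 = 0 := by simp [hg1def]
  have hg1sign := sign_of_deriv_nonneg g1 g2 hg10 hd1 hg2nn
  have hg00 : g0 0 = 0 := by simp [hg0def]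
  have := nonneg_of_deriv_sign g0 g1 hg00 hd0 hg1sign.1 hg1sign.2 t ht
  simp only [hg0def] at this
  linarith

theorem stmt_17 (p s : ℝ) (hp : 2 < p) (hs1 : -(1/2) < s) (hs2 : s < 1/2) :
    (1 + s) ^ (2 / p) ≤
      1 + 2 * s / p - (p - 2) * s ^ 2 / p ^ 2 + (2 / 3) * (p - 1) * (p - 2) * s ^ 3 / p ^ 3 := by
  have hp0 : (0:ℝ) < p := by linarith
  have ha0 : 0 < 2 / p := by positivity
  have ha1 : 2 / p < 1 := by rw [div_lt_one hp0]; linarith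
  have h := key (2 / p) ha0 ha1 s (by linarith)
  have heq : 1 + 2 / p * s + 2 / p * (2 / p - 1) / 2 * s ^ 2 + 2 / p * (2 / p - 1) * (2 / p - 2) / 6 * s ^ 3
      = 1 + 2 * s / p - (p - 2) * s ^ 2 / p ^ 2 + (2 / 3) * (p - 1) * (p - 2) * s ^ 3 / p ^ 3 := by
    field_simp
    ring
  linarith [h, heq.ge, heq.le]
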